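/- For every real ρ > 0, the set V_ρ := {(u,v) ∈ ℝ⁴ × ℝ⁴ : Σ_{j=1}^4 u_j² = Σ_{j=1}^4 v_j² = ρ²/2 and Σ_{j=1}^4 u_j v_j = 0} (the intersection of the cone V with the sphere of radius ρ in ℝ⁸) is homeomorphic to S³ × S². -/

import Mathlib

/-- `V_ρ`: the intersection of the real cone `V` with the sphere of radius `ρ` in `ℝ⁸`. -/
def Vrho (ρ : ℝ) : Set ((Fin 4 → ℝ) × (Fin 4 → ℝ)) :=
  {uv | ∑ j, uv.1 j ^ 2 = ρ ^ 2 / 2 ∧ ∑ j, uv.2 j ^ 2 = ρ ^ 2 / 2 ∧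
    ∑ j, uv.1 j * uv.2 j = 0}

lemma sphere_iff_sum {n : ℕ} (x : EuclideanSpace ℝ (Fin n)) :
    x ∈ Metric.sphere (0 : EuclideanSpace ℝ (Fin n)) 1 ↔ ∑ j, x j ^ 2 = 1 := by
  rw [mem_sphere_zero_iff_norm, EuclideanSpace.norm_eq, Real.sqrt_eq_one]
  simp [sq_abs]

/-- The forward map: rescale `(u, v)` to unit quaternions `(x, y)` and send it to
`(x, Im (x̄ * y))`, written in coordinates. -/
noncomputable def Vf (ρ : ℝ) (p : (Fin 4 → ℝ) × (Fin 4 → ℝ)) :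
    EuclideanSpace ℝ (Fin 4) × EuclideanSpace ℝ (Fin 3) :=
  (WithLp.toLp 2 (fun j => (Real.sqrt 2 / ρ) * p.1 j : Fin 4 → ℝ),
   WithLp.toLp 2 ![ 2/ρ^2 * (p.1 0 * p.2 1 - p.1 1 * p.2 0 - p.1 2 * p.2 3 + p.1 3 * p.2 2),
      2/ρ^2 * (p.1 0 * p.2 2 + p.1 1 * p.2 3 - p.1 2 * p.2 0 - p.1 3 * p.2 1),
      2/ρ^2 * (p.1 0 * p.2 3 - p.1 1 * p.2 2 + p.1 2 * p.2 1 - p.1 3 * p.2 0)])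

/-- The inverse map: `(x, z) ↦ (ρ/√2 · x, ρ/√2 · (x * z))` with quaternion product,
written in coordinates. -/
noncomputable def Vg (ρ : ℝ) (q : EuclideanSpace ℝ (Fin 4) × EuclideanSpace ℝ (Fin 3)) :
    (Fin 4 → ℝ) × (Fin 4 → ℝ) :=
  (fun j => (ρ / Real.sqrt 2) * q.1 j,
   fun j => (ρ / Real.sqrt 2) *
     ![ -(q.1 1 * q.2 0) - q.1 2 * q.2 1 - q.1 3 * q.2 2,
        q.1 0 * q.2 0 + q.1 2 * q.2 2 - q.1 3 * q.2 1,
        q.1 0 * q.2 1 - q.1 1 * q.2 2 + q.1 3 * q.2 0,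
        q.1 0 * q.2 2 + q.1 1 * q.2 1 - q.1 2 * q.2 0 ] j)

lemma Vf_mem1 (ρ : ℝ) (hρ : 0 < ρ) {p : (Fin 4 → ℝ) × (Fin 4 → ℝ)} (hp : p ∈ Vrho ρ) :
    (Vf ρ p).1 ∈ Metric.sphere (0 : EuclideanSpace ℝ (Fin 4)) 1 := by
  obtain ⟨h1, h2, h3⟩ := hp
  rw [sphere_iff_sum]
  simp only [Vf, WithLp.ofLp_toLp, Fin.sum_univ_four] at h1 ⊢
  have hS : Real.sqrt 2 ^ 2 = 2 := Real.sq_sqrt (by norm_num)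
  have key : ∀ a b c d : ℝ, (Real.sqrt 2 / ρ * a) ^ 2 + (Real.sqrt 2 / ρ * b) ^ 2 +
      (Real.sqrt 2 / ρ * c) ^ 2 + (Real.sqrt 2 / ρ * d) ^ 2
      = Real.sqrt 2 ^ 2 / ρ ^ 2 * (a ^ 2 + b ^ 2 + c ^ 2 + d ^ 2) := by intros; ring
  rw [key, h1, hS]
  field_simp

lemma Vf_mem2 (ρ : ℝ) (hρ : 0 < ρ) {p : (Fin 4 → ℝ) × (Fin 4 → ℝ)} (hp : p ∈ Vrho ρ) :
    (Vf ρ p).2 ∈ Metric.sphere (0 : EuclideanSpace ℝ (Fin 3)) 1 := by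
  obtain ⟨h1, h2, h3⟩ := hp
  rw [sphere_iff_sum]
  simp only [Fin.sum_univ_four] at h1 h2 h3
  simp only [Vf, WithLp.ofLp_toLp, Fin.sum_univ_three, Matrix.cons_val_zero, Matrix.cons_val_one,
    Matrix.head_cons, Matrix.cons_val_two, Matrix.tail_cons]
  set u := p.1; set v := p.2
  have key : (2/ρ^2 * (u 0 * v 1 - u 1 * v 0 - u 2 * v 3 + u 3 * v 2)) ^ 2 +
      (2/ρ^2 * (u 0 * v 2 + u 1 * v 3 - u 2 * v 0 - u 3 * v 1)) ^ 2 +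
      (2/ρ^2 * (u 0 * v 3 - u 1 * v 2 + u 2 * v 1 - u 3 * v 0)) ^ 2
      = (2/ρ^2)^2 * (((u 0 ^ 2 + u 1 ^ 2 + u 2 ^ 2 + u 3 ^ 2)) *
          (v 0 ^ 2 + v 1 ^ 2 + v 2 ^ 2 + v 3 ^ 2)
        - ((u 0 * v 0 + u 1 * v 1 + u 2 * v 2 + u 3 * v 3)) ^ 2) := by ring
  rw [key, h1, h2, h3]
  field_simp
  ring

lemma Vg_mem (ρ : ℝ) (hρ : 0 < ρ) {q : EuclideanSpace ℝ (Fin 4) × EuclideanSpace ℝ (Fin 3)}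
    (hq1 : q.1 ∈ Metric.sphere (0 : EuclideanSpace ℝ (Fin 4)) 1)
    (hq2 : q.2 ∈ Metric.sphere (0 : EuclideanSpace ℝ (Fin 3)) 1) :
    Vg ρ q ∈ Vrho ρ := by
  rw [sphere_iff_sum] at hq1 hq2
  simp only [Fin.sum_univ_four, Fin.sum_univ_three] at hq1 hq2
  have hS : Real.sqrt 2 ^ 2 = 2 := Real.sq_sqrt (by norm_num)
  have hS0 : Real.sqrt 2 ≠ 0 := by positivity
  have hρ0 : ρ ≠ 0 := hρ.ne'
  set x := q.1; set z := q.2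
  refine ⟨?_, ?_, ?_⟩ <;>
    simp only [Vg, Fin.sum_univ_four, Matrix.cons_val_zero, Matrix.cons_val_one,
      Matrix.head_cons, Matrix.cons_val_two, Matrix.tail_cons, Matrix.cons_val_three]
  · have key : ∀ a b c d : ℝ, (ρ / Real.sqrt 2 * a) ^ 2 + (ρ / Real.sqrt 2 * b) ^ 2 +
        (ρ / Real.sqrt 2 * c) ^ 2 + (ρ / Real.sqrt 2 * d) ^ 2
        = ρ ^ 2 / Real.sqrt 2 ^ 2 * (a ^ 2 + b ^ 2 + c ^ 2 + d ^ 2) := by intros; ring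
    rw [key, hq1, hS]; ring
  · have key : (ρ / Real.sqrt 2 * (-(x 1 * z 0) - x 2 * z 1 - x 3 * z 2)) ^ 2 +
        (ρ / Real.sqrt 2 * (x 0 * z 0 + x 2 * z 2 - x 3 * z 1)) ^ 2 +
        (ρ / Real.sqrt 2 * (x 0 * z 1 - x 1 * z 2 + x 3 * z 0)) ^ 2 +
        (ρ / Real.sqrt 2 * (x 0 * z 2 + x 1 * z 1 - x 2 * z 0)) ^ 2
        = ρ ^ 2 / Real.sqrt 2 ^ 2 * ((x 0 ^ 2 + x 1 ^ 2 + x 2 ^ 2 + x 3 ^ 2) *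
            (z 0 ^ 2 + z 1 ^ 2 + z 2 ^ 2)) := by ring
    rw [key, hq1, hq2, hS]; ring
  · have key : ρ / Real.sqrt 2 * x 0 * (ρ / Real.sqrt 2 * (-(x 1 * z 0) - x 2 * z 1 - x 3 * z 2)) +
        ρ / Real.sqrt 2 * x 1 * (ρ / Real.sqrt 2 * (x 0 * z 0 + x 2 * z 2 - x 3 * z 1)) +
        ρ / Real.sqrt 2 * x 2 * (ρ / Real.sqrt 2 * (x 0 * z 1 - x 1 * z 2 + x 3 * z 0)) +
        ρ / Real.sqrt 2 * x 3 * (ρ / Real.sqrt 2 * (x 0 * z 2 + x 1 * z 1 - x 2 * z 0)) = 0 := by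
      ring
    rw [key]

lemma Vgf (ρ : ℝ) (hρ : 0 < ρ) {p : (Fin 4 → ℝ) × (Fin 4 → ℝ)} (hp : p ∈ Vrho ρ) :
    Vg ρ (Vf ρ p) = p := by
  obtain ⟨h1, h2, h3⟩ := hp
  simp only [Fin.sum_univ_four] at h1 h2 h3
  have hS : Real.sqrt 2 ^ 2 = 2 := Real.sq_sqrt (by norm_num)
  have hS0 : Real.sqrt 2 ≠ 0 := by positivity
  have hρ0 : ρ ≠ 0 := hρ.ne'
  set u := p.1 with hu; set v := p.2 with hv
  have e20 : (Vg ρ (Vf ρ p)).2 0 = p.2 0 := by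
    simp only [Vg, Vf, WithLp.ofLp_toLp, Matrix.cons_val_zero, Matrix.cons_val_one, Matrix.head_cons,
      Matrix.cons_val_two, Matrix.tail_cons, Matrix.cons_val_three, ← hu, ← hv]
    have key : ρ / Real.sqrt 2 * (-(Real.sqrt 2 / ρ * u 1 * (2/ρ^2 * (u 0 * v 1 - u 1 * v 0 - u 2 * v 3 + u 3 * v 2))) - Real.sqrt 2 / ρ * u 2 * (2/ρ^2 * (u 0 * v 2 + u 1 * v 3 - u 2 * v 0 - u 3 * v 1)) - Real.sqrt 2 / ρ * u 3 * (2/ρ^2 * (u 0 * v 3 - u 1 * v 2 + u 2 * v 1 - u 3 * v 0)))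
        = ρ / Real.sqrt 2 * (Real.sqrt 2 / ρ) * (2/ρ^2) *
          ((u 0 ^ 2 + u 1 ^ 2 + u 2 ^ 2 + u 3 ^ 2) * v 0 - (u 0 * v 0 + u 1 * v 1 + u 2 * v 2 + u 3 * v 3) * u 0) := by ring
    rw [key, h1, h3]
    field_simp
    ring
  have e21 : (Vg ρ (Vf ρ p)).2 1 = p.2 1 := by
    simp only [Vg, Vf, WithLp.ofLp_toLp, Matrix.cons_val_zero, Matrix.cons_val_one, Matrix.head_cons,
      Matrix.cons_val_two, Matrix.tail_cons, Matrix.cons_val_three, ← hu, ← hv]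
    have key : ρ / Real.sqrt 2 * (Real.sqrt 2 / ρ * u 0 * (2/ρ^2 * (u 0 * v 1 - u 1 * v 0 - u 2 * v 3 + u 3 * v 2)) + Real.sqrt 2 / ρ * u 2 * (2/ρ^2 * (u 0 * v 3 - u 1 * v 2 + u 2 * v 1 - u 3 * v 0)) - Real.sqrt 2 / ρ * u 3 * (2/ρ^2 * (u 0 * v 2 + u 1 * v 3 - u 2 * v 0 - u 3 * v 1)))
        = ρ / Real.sqrt 2 * (Real.sqrt 2 / ρ) * (2/ρ^2) *
          ((u 0 ^ 2 + u 1 ^ 2 + u 2 ^ 2 + u 3 ^ 2) * v 1 - (u 0 * v 0 + u 1 * v 1 + u 2 * v 2 + u 3 * v 3) * u 1) := by ring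
    rw [key, h1, h3]
    field_simp
    ring
  have e22 : (Vg ρ (Vf ρ p)).2 2 = p.2 2 := by
    simp only [Vg, Vf, WithLp.ofLp_toLp, Matrix.cons_val_zero, Matrix.cons_val_one, Matrix.head_cons,
      Matrix.cons_val_two, Matrix.tail_cons, Matrix.cons_val_three, ← hu, ← hv]
    have key : ρ / Real.sqrt 2 * (Real.sqrt 2 / ρ * u 0 * (2/ρ^2 * (u 0 * v 2 + u 1 * v 3 - u 2 * v 0 - u 3 * v 1)) - Real.sqrt 2 / ρ * u 1 * (2/ρ^2 * (u 0 * v 3 - u 1 * v 2 + u 2 * v 1 - u 3 * v 0)) + Real.sqrt 2 / ρ * u 3 * (2/ρ^2 * (u 0 * v 1 - u 1 * v 0 - u 2 * v 3 + u 3 * v 2)))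
        = ρ / Real.sqrt 2 * (Real.sqrt 2 / ρ) * (2/ρ^2) *
          ((u 0 ^ 2 + u 1 ^ 2 + u 2 ^ 2 + u 3 ^ 2) * v 2 - (u 0 * v 0 + u 1 * v 1 + u 2 * v 2 + u 3 * v 3) * u 2) := by ring
    rw [key, h1, h3]
    field_simp
    ring
  have e23 : (Vg ρ (Vf ρ p)).2 3 = p.2 3 := by
    simp only [Vg, Vf, WithLp.ofLp_toLp, Matrix.cons_val_zero, Matrix.cons_val_one, Matrix.head_cons,
      Matrix.cons_val_two, Matrix.tail_cons, Matrix.cons_val_three, ← hu, ← hv]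
    have key : ρ / Real.sqrt 2 * (Real.sqrt 2 / ρ * u 0 * (2/ρ^2 * (u 0 * v 3 - u 1 * v 2 + u 2 * v 1 - u 3 * v 0)) + Real.sqrt 2 / ρ * u 1 * (2/ρ^2 * (u 0 * v 2 + u 1 * v 3 - u 2 * v 0 - u 3 * v 1)) - Real.sqrt 2 / ρ * u 2 * (2/ρ^2 * (u 0 * v 1 - u 1 * v 0 - u 2 * v 3 + u 3 * v 2)))
        = ρ / Real.sqrt 2 * (Real.sqrt 2 / ρ) * (2/ρ^2) *
          ((u 0 ^ 2 + u 1 ^ 2 + u 2 ^ 2 + u 3 ^ 2) * v 3 - (u 0 * v 0 + u 1 * v 1 + u 2 * v 2 + u 3 * v 3) * u 3) := by ring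
    rw [key, h1, h3]
    field_simp
    ring
  refine Prod.ext ?_ ?_
  · funext j
    simp only [Vg, Vf, WithLp.ofLp_toLp]
    field_simp
  · funext j
    fin_cases j
    · exact e20
    · exact e21
    · exact e22
    · exact e23

lemma Vfg (ρ : ℝ) (hρ : 0 < ρ) {q : EuclideanSpace ℝ (Fin 4) × EuclideanSpace ℝ (Fin 3)}
    (hq1' : q.1 ∈ Metric.sphere (0 : EuclideanSpace ℝ (Fin 4)) 1)
    (hq2' : q.2 ∈ Metric.sphere (0 : EuclideanSpace ℝ (Fin 3)) 1) :
    Vf ρ (Vg ρ q) = q := by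
  rw [sphere_iff_sum] at hq1' hq2'
  simp only [Fin.sum_univ_four, Fin.sum_univ_three] at hq1' hq2'
  have hq1 := hq1'
  have hS : Real.sqrt 2 ^ 2 = 2 := Real.sq_sqrt (by norm_num)
  have hS0 : Real.sqrt 2 ≠ 0 := by positivity
  have hρ0 : ρ ≠ 0 := hρ.ne'
  set x := q.1 with hx; set z := q.2 with hz
  have e20 : (Vf ρ (Vg ρ q)).2 0 = q.2 0 := by
    simp only [Vg, Vf, WithLp.ofLp_toLp, Matrix.cons_val_zero, Matrix.cons_val_one, Matrix.head_cons,
      Matrix.cons_val_two, Matrix.tail_cons, Matrix.cons_val_three, ← hx, ← hz]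
    have key : 2/ρ^2 * (ρ / Real.sqrt 2 * x 0 * (ρ / Real.sqrt 2 * (x 0 * z 0 + x 2 * z 2 - x 3 * z 1)) - ρ / Real.sqrt 2 * x 1 * (ρ / Real.sqrt 2 * (-(x 1 * z 0) - x 2 * z 1 - x 3 * z 2)) - ρ / Real.sqrt 2 * x 2 * (ρ / Real.sqrt 2 * (x 0 * z 2 + x 1 * z 1 - x 2 * z 0)) + ρ / Real.sqrt 2 * x 3 * (ρ / Real.sqrt 2 * (x 0 * z 1 - x 1 * z 2 + x 3 * z 0)))
        = 2/ρ^2 * (ρ / Real.sqrt 2)^2 * ((x 0 ^ 2 + x 1 ^ 2 + x 2 ^ 2 + x 3 ^ 2) * z 0) := by ring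
    rw [key, hq1]
    field_simp
    rw [hS]
  have e21 : (Vf ρ (Vg ρ q)).2 1 = q.2 1 := by
    simp only [Vg, Vf, WithLp.ofLp_toLp, Matrix.cons_val_zero, Matrix.cons_val_one, Matrix.head_cons,
      Matrix.cons_val_two, Matrix.tail_cons, Matrix.cons_val_three, ← hx, ← hz]
    have key : 2/ρ^2 * (ρ / Real.sqrt 2 * x 0 * (ρ / Real.sqrt 2 * (x 0 * z 1 - x 1 * z 2 + x 3 * z 0)) + ρ / Real.sqrt 2 * x 1 * (ρ / Real.sqrt 2 * (x 0 * z 2 + x 1 * z 1 - x 2 * z 0)) - ρ / Real.sqrt 2 * x 2 * (ρ / Real.sqrt 2 * (-(x 1 * z 0) - x 2 * z 1 - x 3 * z 2)) - ρ / Real.sqrt 2 * x 3 * (ρ / Real.sqrt 2 * (x 0 * z 0 + x 2 * z 2 - x 3 * z 1)))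
        = 2/ρ^2 * (ρ / Real.sqrt 2)^2 * ((x 0 ^ 2 + x 1 ^ 2 + x 2 ^ 2 + x 3 ^ 2) * z 1) := by ring
    rw [key, hq1]
    field_simp
    rw [hS]
  have e22 : (Vf ρ (Vg ρ q)).2 2 = q.2 2 := by
    simp only [Vg, Vf, WithLp.ofLp_toLp, Matrix.cons_val_zero, Matrix.cons_val_one, Matrix.head_cons,
      Matrix.cons_val_two, Matrix.tail_cons, Matrix.cons_val_three, ← hx, ← hz]
    have key : 2/ρ^2 * (ρ / Real.sqrt 2 * x 0 * (ρ / Real.sqrt 2 * (x 0 * z 2 + x 1 * z 1 - x 2 * z 0)) - ρ / Real.sqrt 2 * x 1 * (ρ / Real.sqrt 2 * (x 0 * z 1 - x 1 * z 2 + x 3 * z 0)) + ρ / Real.sqrt 2 * x 2 * (ρ / Real.sqrt 2 * (x 0 * z 0 + x 2 * z 2 - x 3 * z 1)) - ρ / Real.sqrt 2 * x 3 * (ρ / Real.sqrt 2 * (-(x 1 * z 0) - x 2 * z 1 - x 3 * z 2)))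
        = 2/ρ^2 * (ρ / Real.sqrt 2)^2 * ((x 0 ^ 2 + x 1 ^ 2 + x 2 ^ 2 + x 3 ^ 2) * z 2) := by ring
    rw [key, hq1]
    field_simp
    rw [hS]
  refine Prod.ext ?_ ?_
  · refine congrArg (WithLp.toLp 2) (funext fun j => ?_)
    simp only [Vg, Vf, WithLp.ofLp_toLp]
    field_simp
  · refine congrArg (WithLp.toLp 2) (funext fun j => ?_)
    fin_cases j
    · exact e20
    · exact e21
    · exact e22

lemma Vf_cont (ρ : ℝ) : Continuous (Vf ρ) := by
  unfold Vf
  refine Continuous.prodMk ?_ ?_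
  · exact (PiLp.continuous_toLp ..).comp (continuous_pi fun j => continuous_const.mul ((continuous_apply j).comp continuous_fst))
  · refine (PiLp.continuous_toLp ..).comp (continuous_pi fun j => ?_)
    fin_cases j <;> simp <;> fun_prop

lemma Vg_cont (ρ : ℝ) : Continuous (Vg ρ) := by
  unfold Vg
  refine Continuous.prodMk ?_ ?_
  · exact continuous_pi fun j => continuous_const.mul ((continuous_apply j).comp ((PiLp.continuous_ofLp ..).comp continuous_fst))
  · refine continuous_pi fun j => continuous_const.mul ?_
    fin_cases j <;> simp <;> fun_prop

theorem stmt1 (ρ : ℝ) (hρ : 0 < ρ) :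
    Nonempty (↥(Vrho ρ) ≃ₜ
      (↥(Metric.sphere (0 : EuclideanSpace ℝ (Fin 4)) 1) ×
       ↥(Metric.sphere (0 : EuclideanSpace ℝ (Fin 3)) 1))) := by
  refine ⟨{
    toFun := fun p => (⟨(Vf ρ p.1).1, Vf_mem1 ρ hρ p.2⟩, ⟨(Vf ρ p.1).2, Vf_mem2 ρ hρ p.2⟩),
    invFun := fun q => ⟨Vg ρ (q.1.1, q.2.1), Vg_mem ρ hρ q.1.2 q.2.2⟩,
    left_inv := fun p => Subtype.ext (Vgf ρ hρ p.2),
    right_inv := fun q => by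
      have h := Vfg ρ hρ (q := (q.1.1, q.2.1)) q.1.2 q.2.2
      refine Prod.ext (Subtype.ext ?_) (Subtype.ext ?_)
      · exact congrArg Prod.fst h
      · exact congrArg Prod.snd h,
    continuous_toFun := by
      refine Continuous.prodMk (Continuous.subtype_mk ?_ _) (Continuous.subtype_mk ?_ _)
      · exact ((Vf_cont ρ).comp continuous_subtype_val).fst
      · exact ((Vf_cont ρ).comp continuous_subtype_val).snd
    continuous_invFun := by
      refine Continuous.subtype_mk ((Vg_cont ρ).comp ?_) _
      exact Continuous.prodMk (continuous_subtype_val.comp continuous_fst)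
        (continuous_subtype_val.comp continuous_snd) }⟩
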